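/- arXiv:1403.5170 — 4 statements merged into one kernel-verified Lean document; each statement's English description precedes it below -/
import Mathlib

section
/- Let K ⊆ L ⊆ A* be prefix-closed languages such that K is controllable with respect to L and A_u ⊆ A. If the natural projection P : A* → A_o* (A_o ⊆ A) is an L-observer and is OCC for L, then P(K) is controllable with respect to P(L) and A_u ∩ A_o. -/
variable {α : Type*}

/-- The natural projection onto subalphabet `B`: erases events not in `B`. -/
noncomputable def proj (B : Set α) (w : List α) : List α :=
  w.filter fun a => @decide (a ∈ B) (Classical.propDecidable _)

/-- Words over alphabet `A`. -/
def Words (A : Set α) : Set (List α) := {w | ∀ a ∈ w, a ∈ A}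

/-- Synchronous product of a family of languages `M i` over alphabets `B i`:
`‖_i M i = ⋂_i P_{B i}⁻¹ (M i)`, a language over `⋃ i, B i`. -/
def SyncProd {ι : Type*} (B : ι → Set α) (M : ι → Set (List α)) : Set (List α) :=
  {w | w ∈ Words (⋃ i, B i) ∧ ∀ i, proj (B i) w ∈ M i}

/-- Binary synchronous product of `M₁` over `B₁` and `M₂` over `B₂`. -/
def sync2 (B₁ B₂ : Set α) (M₁ M₂ : Set (List α)) : Set (List α) :=
  {w | w ∈ Words (B₁ ∪ B₂) ∧ proj B₁ w ∈ M₁ ∧ proj B₂ w ∈ M₂}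

/-- `K` is controllable with respect to `L` and uncontrollable events `Au`:
`K·Au ∩ L ⊆ K`. -/
def Controllable (K L : Set (List α)) (Au : Set α) : Prop :=
  ∀ s ∈ K, ∀ a ∈ Au, s ++ [a] ∈ L → s ++ [a] ∈ K

def PrefixClosed (L : Set (List α)) : Prop :=
  ∀ w ∈ L, ∀ v : List α, v <+: w → v ∈ L

/-- The projection onto `B` is an `L`-observer. -/
def IsObserver (B : Set α) (L : Set (List α)) : Prop :=
  ∀ t ∈ proj B '' L, ∀ s ∈ L, proj B s <+: t →
    ∃ u : List α, s ++ u ∈ L ∧ proj B (s ++ u) = t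

/-- The projection onto `Ao` is output control consistent (OCC) for `L`
(with uncontrollable events `Au`). -/
def OCC (Ao Au : Set α) (L : Set (List α)) : Prop :=
  ∀ s ∈ L, ∀ (mid : List α) (σk : α), σk ∈ Ao → (∀ a ∈ mid, a ∉ Ao) →
    (s = mid ++ [σk] ∨
      ∃ (s' : List α) (σ' : α), σ' ∈ Ao ∧ s = s' ++ σ' :: (mid ++ [σk])) →
    σk ∈ Au → ∀ a ∈ mid, a ∈ Au

/-- Supremal controllable sublanguage of `K` w.r.t. `L` and `Au`:
the union of all sublanguages of `K` controllable w.r.t. `L` and `Au`. -/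
def supC (K L : Set (List α)) (Au : Set α) : Set (List α) :=
  ⋃₀ {M | M ⊆ K ∧ Controllable M L Au}

/-- C&P coobservability of `K'` w.r.t. plant `L`, observation alphabets `Bo i`
and local controllable alphabets `Bc i`. -/
def Coobservable {ι : Type*} (Bo Bc : ι → Set α) (L K' : Set (List α)) : Prop :=
  ∀ s ∈ K', ∀ a ∈ ⋃ i, Bc i, s ++ [a] ∈ L → s ++ [a] ∉ K' →
    ∃ i, a ∈ Bc i ∧
      ∀ s' ∈ Words (⋃ j, Bo j), proj (Bo i) s' = proj (Bo i) s → s' ++ [a] ∉ K'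

/-- The closed-loop language of supervisor `S` over plant `M`:
the smallest language containing `ε` and closed under enabled extensions in `M`. -/
inductive InClosedLoop (S : List α → Set α) (M : Set (List α)) : List α → Prop
  | nil : InClosedLoop S M []
  | step {s : List α} {a : α} : InClosedLoop S M s → s ++ [a] ∈ M → a ∈ S s →
      InClosedLoop S M (s ++ [a])

def ClosedLoop (S : List α → Set α) (M : Set (List α)) : Set (List α) :=
  {w | InClosedLoop S M w}

/-- A supervisor over alphabet `B` whose control patterns contain the
uncontrollable events `Bu` (i.e. `Bu ⊆ S s ⊆ B`). -/
def IsSupervisor (B Bu : Set α) (S : List α → Set α) : Prop :=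
  ∀ s : List α, Bu ⊆ S s ∧ S s ⊆ B

/-- The coordinator language `L_k = ‖_{i=1}^n P_k (L i)` (each `P_k(L i)` being a
language over `A i ∩ Ak`). -/
def coordLang {n : ℕ} (A : Fin n → Set α) (Ak : Set α) (L : Fin n → Set (List α)) :
    Set (List α) :=
  SyncProd (fun i => A i ∩ Ak) (fun i => proj Ak '' L i)

/-- Two-level conditional controllability of `K` w.r.t. plants `L i` over `A i`,
grouping `g`, group-coordinator alphabets `Akj j` (coordinators
`L_{k_j} = ‖_i P_{k_j}(L i)`), and uncontrollable events `Au`. -/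
def TwoLevelCC {n m : ℕ} (A : Fin n → Set α) (g : Fin n → Fin m) (Akj : Fin m → Set α)
    (L : Fin n → Set (List α)) (Au : Set α) (K : Set (List α)) : Prop :=
  (∀ j : Fin m, Controllable (proj (Akj j) '' K) (coordLang A (Akj j) L) (Akj j ∩ Au)) ∧
  (∀ i : Fin n, Controllable (proj (A i ∪ Akj (g i)) '' K)
      (sync2 (A i) (Akj (g i)) (L i) (proj (Akj (g i)) '' K))
      ((A i ∪ Akj (g i)) ∩ Au))

/-- `supC_{k_j}`. -/
def supCk {n : ℕ} (A : Fin n → Set α) (Akj : Set α) (L : Fin n → Set (List α))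
    (Au : Set α) (K : Set (List α)) : Set (List α) :=
  supC (proj Akj '' K) (coordLang A Akj L) (Akj ∩ Au)

/-- `supC_{i+k_j}` (with `j = g i`). -/
def supCik {n m : ℕ} (A : Fin n → Set α) (g : Fin n → Fin m) (Akj : Fin m → Set α)
    (L : Fin n → Set (List α)) (Au : Set α) (K : Set (List α)) (i : Fin n) :
    Set (List α) :=
  supC (proj (A i ∪ Akj (g i)) '' K)
    (sync2 (A i) (Akj (g i)) (L i) (supCk A (Akj (g i)) L Au K))
    ((A i ∪ Akj (g i)) ∩ Au)

/-- Two-level conditional decomposability of `K` w.r.t. `(A i)`, the high-level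
coordinator alphabet `Ak` and the low-level coordinator alphabets `Akj j`. -/
def TwoLevelCD {n m : ℕ} (A : Fin n → Set α) (g : Fin n → Fin m) (Ak : Set α)
    (Akj : Fin m → Set α) (K : Set (List α)) : Prop :=
  K = SyncProd (fun r : Fin m => (⋃ i ∈ {i | g i = r}, A i) ∪ Ak)
        (fun r => proj ((⋃ i ∈ {i | g i = r}, A i) ∪ Ak) '' K) ∧
  ∀ r : Fin m, proj ((⋃ i ∈ {i | g i = r}, A i) ∪ Ak) '' K =
    SyncProd (fun i : {i : Fin n // g i = r} => A i.1 ∪ Akj r)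
      (fun i => proj (A i.1 ∪ Akj r) '' K)

/-- The supremal two-level conditionally controllable sublanguage of `K`. -/
def supTwoCC {n m : ℕ} (A : Fin n → Set α) (g : Fin n → Fin m) (Akj : Fin m → Set α)
    (L : Fin n → Set (List α)) (Au : Set α) (K : Set (List α)) : Set (List α) :=
  ⋃₀ {K' | K' ⊆ K ∧ PrefixClosed K' ∧ TwoLevelCC A g Akj L Au K'}

lemma proj_append (B : Set α) (u v : List α) :
    proj B (u ++ v) = proj B u ++ proj B v := List.filter_append ..

lemma proj_eq_nil (B : Set α) (u : List α) (h : ∀ x ∈ u, x ∉ B) :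
    proj B u = [] := by
  simp only [proj, List.filter_eq_nil_iff, decide_eq_true_eq]; exact h

lemma proj_singleton_mem (B : Set α) (a : α) (ha : a ∈ B) :
    proj B [a] = [a] := by
  simp [proj, ha]

/-- If the filter of `u` is `[a]`, decompose `u`. -/
lemma filter_eq_singleton (B : Set α) (a : α) :
    ∀ u : List α, proj B u = [a] →
      ∃ m m', u = m ++ a :: m' ∧ (∀ x ∈ m, x ∉ B) ∧ a ∈ B ∧ (∀ x ∈ m', x ∉ B) := by
  intro u
  induction u with
  | nil => intro h; simp [proj] at h
  | cons x u ih =>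
    intro h
    by_cases hx : x ∈ B
    · have hfx : proj B (x :: u) = x :: proj B u := by
        simp [proj, hx]
      rw [hfx] at h
      obtain ⟨rfl, hu⟩ := List.cons.injEq .. ▸ h
      refine ⟨[], u, rfl, by simp, hx, ?_⟩
      intro y hy
      have := List.filter_eq_nil_iff.mp hu y hy
      simpa using this
    · have hfx : proj B (x :: u) = proj B u := by
        simp [proj, hx]
      rw [hfx] at h
      obtain ⟨m, m', rfl, hm, haB, hm'⟩ := ih h
      refine ⟨x :: m, m', rfl, ?_, haB, hm'⟩
      intro y hy
      rcases List.mem_cons.mp hy with rfl | hy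
      exacts [hx, hm y hy]

/-- Last-occurrence decomposition. -/
lemma last_occ (B : Set α) (s : List α) :
    (∀ x ∈ s, x ∉ B) ∨
      ∃ s₁ c s₂, s = s₁ ++ c :: s₂ ∧ c ∈ B ∧ ∀ x ∈ s₂, x ∉ B := by
  induction s using List.reverseRecOn with
  | nil => left; simp
  | append_singleton s x ih =>
    by_cases hx : x ∈ B
    · right; exact ⟨s, x, [], by simp, hx, by simp⟩
    · rcases ih with h | ⟨s₁, c, s₂, rfl, hc, hs₂⟩
      · left; intro y hy
        rcases List.mem_append.mp hy with hy | hy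
        · exact h y hy
        · simpa using (List.mem_singleton.mp hy) ▸ hx
      · right
        refine ⟨s₁, c, s₂ ++ [x], by simp, hc, ?_⟩
        intro y hy
        rcases List.mem_append.mp hy with hy | hy
        · exact hs₂ y hy
        · exact (List.mem_singleton.mp hy) ▸ hx

/-- Extend membership in `K` along a word of uncontrollable events inside `L`. -/
lemma extend_unc {K L : Set (List α)} {Au : Set α}
    (hLpc : PrefixClosed L) (hcont : Controllable K L Au)
    (s : List α) (hs : s ∈ K) :
    ∀ m : List α, (∀ x ∈ m, x ∈ Au) → s ++ m ∈ L → s ++ m ∈ K := by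
  intro m
  induction m using List.reverseRecOn with
  | nil => intro _ _; simpa using hs
  | append_singleton m x ih =>
    intro hmAu hL
    have hm' : s ++ m ∈ L := hLpc _ hL _ ⟨[x], by simp⟩
    have hK' : s ++ m ∈ K := ih (fun y hy => hmAu y (by simp [hy])) hm'
    have := hcont _ hK' x (hmAu x (by simp)) (by simpa using hL)
    simpa using this
/-- If `K ⊆ L` is controllable w.r.t. `L` and `Au`, and the projection
onto `Ao` is an `L`-observer and OCC for `L`, then `P(K)` is controllable w.r.t.
`P(L)` and `Au ∩ Ao`. -/
theorem stmt_1 (A Au Ao : Set α) (hAu : Au ⊆ A) (hAo : Ao ⊆ A)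
    (K L : Set (List α)) (hKL : K ⊆ L) (hLW : L ⊆ Words A)
    (hKpc : PrefixClosed K) (hLpc : PrefixClosed L)
    (hcont : Controllable K L Au)
    (hobs : IsObserver Ao L) (hocc : OCC Ao Au L) :
    Controllable (proj Ao '' K) (proj Ao '' L) (Au ∩ Ao) := by
  rintro t ⟨s, hsK, rfl⟩ a ⟨haAu, haAo⟩ haL
  -- observer: extend s inside L to project to t ++ [a]
  have hsL : s ∈ L := hKL hsK
  obtain ⟨u, huL, huP⟩ := hobs _ haL s hsL ⟨[a], rfl⟩
  rw [proj_append] at huP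
  have hPu : proj Ao u = [a] := by
    have := List.append_cancel_left huP
    exact this
  obtain ⟨m, m', rfl, hm, _, _⟩ := filter_eq_singleton Ao a u hPu
  -- cut off m'
  have hL1 : s ++ m ++ [a] ∈ L := by
    refine hLpc _ huL _ ⟨m', by simp⟩
  -- OCC gives m ⊆ Au
  have hmAu : ∀ x ∈ m, x ∈ Au := by
    rcases last_occ Ao s with hsno | ⟨s₁, c, s₂, rfl, hc, hs₂⟩
    · have := hocc _ hL1 (s ++ m) a haAo
        (by intro x hx; rcases List.mem_append.mp hx with h | h
            exacts [hsno x h, hm x h])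
        (Or.inl (by simp)) haAu
      intro x hx; exact this x (by simp [hx])
    · have hform : s₁ ++ c :: s₂ ++ m ++ [a] = s₁ ++ c :: ((s₂ ++ m) ++ [a]) := by
        simp
      have := hocc _ hL1 (s₂ ++ m) a haAo
        (by intro x hx; rcases List.mem_append.mp hx with h | h
            exacts [hs₂ x h, hm x h])
        (Or.inr ⟨s₁, c, hc, hform⟩) haAu
      intro x hx; exact this x (by simp [hx])
  -- controllability along m then a
  have hK1 : s ++ m ∈ K :=
    extend_unc hLpc hcont s hsK m hmAu (hLpc _ hL1 _ ⟨[a], by simp⟩)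
  have hK2 : s ++ m ++ [a] ∈ K := hcont _ hK1 a haAu hL1
  refine ⟨s ++ m ++ [a], hK2, ?_⟩
  rw [proj_append, proj_append, proj_eq_nil Ao m hm, proj_singleton_mem Ao a haAo]
  simp
end

section
/- Let A = ∪_{i=1}^n A_i, A_u ⊆ A, and A_{i,u} = A_i ∩ A_u. For i = 1,…,n, let K_i ⊆ L_i ⊆ A_i* be prefix-closed languages such that K_i is controllable with respect to L_i and A_{i,u}. Then the synchronous product ‖_{i=1}^n K_i is controllable with respect to ‖_{i=1}^n L_i and ∪_{i=1}^n A_{i,u}. -/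
variable {α : Type*}

/-- If each `K i ⊆ L i ⊆ (A i)*` is controllable w.r.t. `L i` and
`A i ∩ Au`, then `‖ K i` is controllable w.r.t. `‖ L i` and `⋃ (A i ∩ Au)`. -/
theorem stmt_2 (n : ℕ) (A : Fin n → Set α) (Au : Set α) (hAu : Au ⊆ ⋃ i, A i)
    (K L : Fin n → Set (List α))
    (hKL : ∀ i, K i ⊆ L i) (hLW : ∀ i, L i ⊆ Words (A i))
    (hKpc : ∀ i, PrefixClosed (K i)) (hLpc : ∀ i, PrefixClosed (L i))
    (hcont : ∀ i, Controllable (K i) (L i) (A i ∩ Au)) :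
    Controllable (SyncProd A K) (SyncProd A L) (⋃ i, A i ∩ Au) := by
  rintro s ⟨hsW, hsK⟩ a ha hL
  obtain ⟨_, ⟨j, rfl⟩, haj, hau⟩ := ha
  refine ⟨hL.1, fun i => ?_⟩
  have hproj : proj (A i) (s ++ [a]) =
      proj (A i) s ++ proj (A i) [a] := List.filter_append _ _
  by_cases hai : a ∈ A i
  · have h1 : proj (A i) [a] = [a] := by
      simp [proj, hai]
    have hLi : proj (A i) s ++ [a] ∈ L i := by
      have := hL.2 i
      rwa [hproj, h1] at this
    have := hcont i _ (hsK i) a ⟨hai, hau⟩ hLi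
    rwa [hproj, h1]
  · have h1 : proj (A i) [a] = [] := by
      simp [proj, hai]
    rw [hproj, h1, List.append_nil]
    exact hsK i
end

section
/- Let A_1,…,A_n be alphabets, A = ∪_{i=1}^n A_i, and let A_k ⊆ A be a coordinator alphabet. A language K ⊆ A* is conditionally decomposable with respect to (A_i)_{i=1}^n and A_k, i.e., K = ‖_{i=1}^n P_{i+k}(K), if and only if there exist languages M_i ⊆ (A_i ∪ A_k)* (i = 1,…,n) such that K = ‖_{i=1}^n M_i. -/
variable {α : Type*}

/-- `K` is conditionally decomposable w.r.t. `(A i)` and `Ak` iff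
there exist languages `M i ⊆ (A i ∪ Ak)*` with `K = ‖ M i`. -/
theorem stmt_5 (n : ℕ) (A : Fin n → Set α) (Ak : Set α)
    (hsh : ∀ i j, i ≠ j → A i ∩ A j ⊆ Ak) (hAk : Ak ⊆ ⋃ i, A i)
    (K : Set (List α)) (hK : K ⊆ Words (⋃ i, A i)) :
    K = SyncProd (fun i => A i ∪ Ak) (fun i => proj (A i ∪ Ak) '' K) ↔
      ∃ M : Fin n → Set (List α), (∀ i, M i ⊆ Words (A i ∪ Ak)) ∧
        K = SyncProd (fun i => A i ∪ Ak) M := by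
  constructor
  · intro h
    refine ⟨fun i => proj (A i ∪ Ak) '' K, ?_, h⟩
    intro i w hw
    rcases hw with ⟨s, _, rfl⟩
    intro a ha
    have := List.of_mem_filter ha
    exact @of_decide_eq_true _ (Classical.propDecidable _) this
  · rintro ⟨M, hM, hKM⟩
    apply Set.Subset.antisymm
    · intro w hw
      refine ⟨?_, fun i => ⟨w, hw, rfl⟩⟩
      intro a ha
      rcases Set.mem_iUnion.mp (hK hw a ha) with ⟨i, hi⟩
      exact Set.mem_iUnion.mpr ⟨i, Or.inl hi⟩
    · intro w hw
      rw [hKM]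
      refine ⟨hw.1, fun i => ?_⟩
      rcases hw.2 i with ⟨s, hs, hps⟩
      have : s ∈ SyncProd (fun i => A i ∪ Ak) M := hKM ▸ hs
      exact hps ▸ this.2 i
end

section
/- Let Σ = ∪_{i=1}^n Σ_{o,i}, let Σ_{c,i} ⊆ Σ (i = 1,…,n) with Σ_c = ∪_{i=1}^n Σ_{c,i}, and assume Σ_{o,i} ∩ Σ_c ⊆ Σ_{c,i} for i = 1,…,n. Let L ⊆ Σ* be a prefix-closed plant language and K ⊆ Σ* a prefix-closed language. If K is separable with respect to (Σ_{o,i})_{i=1}^n, i.e., K = ‖_{i=1}^n P_i(K), then K ∩ L is (C&P) coobservable with respect to L and (Σ_{o,i})_{i=1}^n. -/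
variable {α : Type*}

lemma proj_append_single (B : Set α) (s : List α) (a : α) :
    proj B (s ++ [a]) = proj B s ++ proj B [a] := by
  simp [proj, List.filter_append]

lemma proj_single_mem (B : Set α) (a : α) (h : a ∈ B) : proj B [a] = [a] := by
  simp [proj, h]

lemma proj_single_not_mem (B : Set α) (a : α) (h : a ∉ B) : proj B [a] = [] := by
  simp [proj, h]

/-- If `Σ_{o,i} ∩ Σ_c ⊆ Σ_{c,i}` for all `i` and `K` is separable
w.r.t. `(Σ_{o,i})`, then `K ∩ L` is C&P coobservable w.r.t. `L` and `(Σ_{o,i})`. -/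
theorem stmt_15 (n : ℕ) (So Sc : Fin n → Set α)
    (hScS : ∀ i, Sc i ⊆ ⋃ j, So j)
    (hcc : ∀ i, So i ∩ (⋃ j, Sc j) ⊆ Sc i)
    (L K : Set (List α))
    (hLW : L ⊆ Words (⋃ i, So i)) (hLpc : PrefixClosed L)
    (hKW : K ⊆ Words (⋃ i, So i)) (hKpc : PrefixClosed K)
    (hsep : K = SyncProd So (fun i => proj (So i) '' K)) :
    Coobservable So Sc L (K ∩ L) := by
  intro s hs a ha hsaL hsaK
  have hsW : s ∈ Words (⋃ i, So i) := hLW hs.2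
  have haW : a ∈ ⋃ i, So i := by
    obtain ⟨_, ⟨j, rfl⟩, haj⟩ := ha
    exact hScS j haj
  have hsaW : s ++ [a] ∈ Words (⋃ i, So i) := by
    intro b hb
    rcases List.mem_append.1 hb with h | h
    · exact hsW b h
    · simp at h; subst h; exact haW
  have hsaK' : s ++ [a] ∉ K := fun h => hsaK ⟨h, hsaL⟩
  -- find i such that proj (So i) (s ++ [a]) ∉ proj (So i) '' K
  have : ∃ i, proj (So i) (s ++ [a]) ∉ proj (So i) '' K := by
    by_contra h
    push_neg at h
    apply hsaK'
    rw [hsep]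
    exact ⟨hsaW, h⟩
  obtain ⟨i, hi⟩ := this
  have haSo : a ∈ So i := by
    by_contra hna
    apply hi
    rw [proj_append_single, proj_single_not_mem _ _ hna, List.append_nil]
    exact ⟨s, hs.1, rfl⟩
  refine ⟨i, hcc i ⟨haSo, ha⟩, ?_⟩
  intro s' _ hps hmem
  apply hi
  have : proj (So i) (s' ++ [a]) = proj (So i) (s ++ [a]) := by
    rw [proj_append_single, proj_append_single, hps]
  rw [← this]
  exact ⟨s' ++ [a], hmem.1, rfl⟩
end
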